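/- Let D ⊂ ℝ^N be a bounded convex domain with closure(D) ⊂ B_R = {z : ‖z‖ < R}, with smooth boundary. For each x ∈ ∂B_R let d(x) = dist(x, ∂D) and B_x = {z ∈ B_R : ‖z−x‖ < d(x)}. Then closure(D) = B_R \ ⋃_{x ∈ ∂B_R} B_x. -/

import Mathlib

open Metric
open scoped RealInnerProductSpace

/-- A preconnected set containing a point of a set and a point outside its closure
meets the frontier. -/
lemma segment_meets_frontier {E : Type*} [NormedAddCommGroup E] [NormedSpace ℝ E]
    {K : Set E} (hK : IsClosed K) {z x : E} (hz : z ∈ K) (hx : x ∉ K) :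
    ∃ w ∈ segment ℝ z x, w ∈ frontier K := by
  by_contra h
  push_neg at h
  have hp : IsPreconnected (segment ℝ z x) := (convex_segment z x).isPreconnected
  have hsub : segment ℝ z x ⊆ interior K ∪ Kᶜ := by
    intro p hp'
    have hpf := h p hp'
    rcases Classical.em (p ∈ K) with hpK | hpK
    · left
      by_contra hpi
      exact hpf ⟨subset_closure hpK, hpi⟩
    · right; exact hpK
  have hz' : z ∈ interior K := by
    have := hsub (left_mem_segment ℝ z x)
    rcases this with h1 | h1
    · exact h1
    · exact absurd hz h1
  obtain ⟨p, _, hp1, hp2⟩ := hp (interior K) Kᶜ isOpen_interior hK.isOpen_compl hsub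
    ⟨z, left_mem_segment ℝ z x, hz'⟩ ⟨x, right_mem_segment ℝ z x, hx⟩
  exact hp2 (interior_subset hp1)

/-- A bounded convex domain `D` with `closure D ⊂ B_R` is recovered from the distances
`d(x) = dist(x, ∂D)` for `x` on the sphere `Γ_R = ∂B_R`:
`closure D = B_R \ ⋃_{x ∈ ∂B_R} B_x` where `B_x = {z ∈ B_R : ‖z−x‖ < d(x)}`. -/
theorem obstacle_recovered_from_boundary_distances
    (N : ℕ) (R : ℝ) (hR : 0 < R)
    (D : Set (EuclideanSpace ℝ (Fin N)))
    (hD_open : IsOpen D) (hD_ne : D.Nonempty)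
    (hD_conv : Convex ℝ D)
    (hD_sub : closure D ⊆ ball (0 : EuclideanSpace ℝ (Fin N)) R) :
    closure D =
      ball (0 : EuclideanSpace ℝ (Fin N)) R \
        ⋃ x ∈ sphere (0 : EuclideanSpace ℝ (Fin N)) R,
          {z ∈ ball (0 : EuclideanSpace ℝ (Fin N)) R |
            dist z x < infDist x (frontier D)} := by
  ext z
  simp only [Set.mem_diff, Set.mem_iUnion, Set.mem_setOf_eq, not_exists, exists_prop]
  constructor
  · intro hz
    refine ⟨hD_sub hz, ?_⟩
    rintro x ⟨hx, hzball, hlt⟩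
    have hxR : ‖x‖ = R := by simpa using hx
    have hxnot : x ∉ closure D := by
      intro h
      have := hD_sub h
      rw [mem_ball_zero_iff] at this
      linarith [hxR ▸ this]
    obtain ⟨w, hwseg, hwf⟩ := segment_meets_frontier isClosed_closure hz hxnot
    have hwf' : w ∈ frontier D := frontier_closure_subset hwf
    have h1 : infDist x (frontier D) ≤ dist x w := infDist_le_dist_of_mem hwf'
    have h2 : dist w x ≤ dist z x := by
      have : w ∈ closedBall x (dist z x) := by
        refine (convex_closedBall x (dist z x)).segment_subset ?_ ?_ hwseg
        · exact mem_closedBall.2 le_rfl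
        · exact mem_closedBall.2 (by simp [dist_comm])
      simpa [mem_closedBall] using this
    rw [dist_comm x w] at h1
    linarith
  · rintro ⟨hzball, hnot⟩
    by_contra hz
    set K := closure D with hKdef
    have hKconv : Convex ℝ K := hD_conv.closure
    have hKne : K.Nonempty := hD_ne.closure
    have hKcomp : IsComplete K := isClosed_closure.isComplete
    obtain ⟨y, hyK, hymin⟩ := exists_norm_eq_iInf_of_complete_convex hKne hKcomp hKconv z
    have hinner : ∀ w ∈ K, (inner ℝ (z - y) (w - y) : ℝ) ≤ 0 :=
      (norm_eq_iInf_iff_real_inner_le_zero hKconv hyK).1 hymin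
    have hzy : z ≠ y := fun h => hz (h ▸ hyK)
    have hzy' : (0:ℝ) < ‖z - y‖ := by
      rw [norm_pos_iff, sub_ne_zero]; exact hzy
    -- find t ≥ 1 with ‖y + t • (z - y)‖ = R
    set f : ℝ → ℝ := fun t => ‖y + t • (z - y)‖ with hf
    have hfc : Continuous f := by continuity
    set T : ℝ := (R + ‖y‖) / ‖z - y‖ with hT
    have hyb : ‖y‖ < R := by
      have := hD_sub hyK; rwa [mem_ball_zero_iff] at this
    have hzb : ‖z‖ < R := by rwa [mem_ball_zero_iff] at hzball
    have hf1 : f 1 = ‖z‖ := by simp [hf]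
    have h1T : (1:ℝ) ≤ T := by
      rw [hT, le_div_iff₀ hzy', one_mul]
      calc ‖z - y‖ ≤ ‖z‖ + ‖y‖ := norm_sub_le _ _
        _ ≤ R + ‖y‖ := by linarith
    have hfT : R ≤ f T := by
      have : T * ‖z - y‖ = R + ‖y‖ := div_mul_cancel₀ _ (ne_of_gt hzy')
      calc R = T * ‖z - y‖ - ‖y‖ := by linarith
        _ = ‖T • (z - y)‖ - ‖y‖ := by rw [norm_smul, Real.norm_eq_abs,
              abs_of_nonneg (by linarith : (0:ℝ) ≤ T)]
        _ ≤ ‖y + T • (z - y)‖ := by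
              have := norm_sub_le (y + T • (z - y)) y
              simp only [add_sub_cancel_left] at this
              linarith
        _ = f T := rfl
    have hivt : R ∈ f '' Set.Icc 1 T := by
      apply intermediate_value_Icc h1T hfc.continuousOn
      exact ⟨by rw [hf1]; linarith, hfT⟩
    obtain ⟨t, htmem, htR⟩ := hivt
    have ht1 : (1:ℝ) ≤ t := htmem.1
    set x : EuclideanSpace ℝ (Fin N) := y + t • (z - y) with hx
    have hxsphere : x ∈ sphere (0 : EuclideanSpace ℝ (Fin N)) R := by
      rw [mem_sphere_zero_iff_norm]; exact htR
    -- y minimizes distance from x over K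
    have hmin : ∀ w ∈ frontier D, dist x y ≤ dist x w := by
      intro w hw
      have hwK : w ∈ K := frontier_subset_closure hw
      have hin : (inner ℝ (x - y) (w - y) : ℝ) ≤ 0 := by
        have : x - y = t • (z - y) := by rw [hx]; abel
        rw [this, real_inner_smul_left]
        exact mul_nonpos_of_nonneg_of_nonpos (by linarith) (hinner w hwK)
      have hsq : ‖x - y‖^2 ≤ ‖x - w‖^2 := by
        have hexp : x - w = (x - y) - (w - y) := by abel
        rw [hexp]
        nlinarith [norm_sub_sq_real (x - y) (w - y), sq_nonneg ‖w - y‖, hin]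
      have h0 : (0:ℝ) ≤ ‖x - w‖ := norm_nonneg _
      have h0' : (0:ℝ) ≤ ‖x - y‖ := norm_nonneg _
      rw [dist_eq_norm, dist_eq_norm]
      nlinarith
    have hfne : (frontier D).Nonempty := by
      rw [nonempty_frontier_iff]
      refine ⟨hD_ne, fun h => hz ?_⟩
      rw [hKdef, h]; simp
    have hle : dist x y ≤ infDist x (frontier D) := by
      by_contra h
      push_neg at h
      obtain ⟨w, hw, hlt⟩ := (infDist_lt_iff hfne).1 h
      exact absurd hlt (not_lt.2 (hmin w hw))
    have hdzx : dist z x = (t - 1) * ‖z - y‖ := by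
      have : x - z = (t - 1) • (z - y) := by
        rw [hx, sub_smul, one_smul]; abel
      rw [dist_comm, dist_eq_norm, this, norm_smul, Real.norm_eq_abs,
        abs_of_nonneg (by linarith : (0:ℝ) ≤ t - 1)]
    have hdxy : dist x y = t * ‖z - y‖ := by
      have : x - y = t • (z - y) := by rw [hx]; abel
      rw [dist_eq_norm, this, norm_smul, Real.norm_eq_abs,
        abs_of_nonneg (by linarith : (0:ℝ) ≤ t)]
    have : dist z x < infDist x (frontier D) := by
      rw [hdzx]
      calc (t - 1) * ‖z - y‖ < t * ‖z - y‖ := by nlinarith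
        _ = dist x y := hdxy.symm
        _ ≤ _ := hle
    exact hnot x ⟨hxsphere, hzball, this⟩
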